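/- Let c¹, c² ∈ ℕ₊ⁿ define a BUCO instance and let (H, c1, c2) be the associated MSp instance. Then the non-dominated set Y_N of the MSp instance contains at most n + 1 value vectors y with first component y¹ ≥ M. -/

import Mathlib

namespace MSpPaper

open SimpleGraph

variable {V : Type*}

/-- Minimum total `c2`-weight of a walk from `u` to `v` using only edges in `F`
(the set of weights of such walks is a set of naturals; its infimum is `0` when no walk exists). -/
noncomputable def wdist (F : Set (Sym2 V)) (c2 : Sym2 V → ℕ) (u v : V) : ℕ :=
  sInf (Set.range fun p : (SimpleGraph.fromEdgeSet F).Walk u v => (p.edges.map c2).sum)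

/-- `S` is a spanner of `G`: a subset of the edges such that the resulting subgraph is connected. -/
def IsSpanner (G : SimpleGraph V) (S : Set (Sym2 V)) : Prop :=
  S ⊆ G.edgeSet ∧ (SimpleGraph.fromEdgeSet S).Connected

/-- First objective: total `c1`-cost of the spanner. -/
def f1 (c1 : Sym2 V → ℤ) (S : Finset (Sym2 V)) : ℤ := ∑ e ∈ S, c1 e

open scoped Classical in
/-- Second objective (stretch factor): maximum over pairs of distinct vertices of the
distance ratio `d^S(u,v)/d^E(u,v)` (junk value `0` if there is no pair of distinct vertices). -/
noncomputable def f2 [Fintype V] (E S : Set (Sym2 V)) (c2 : Sym2 V → ℕ) : ℚ :=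
  if h : ((Finset.univ : Finset (V × V)).filter fun p => p.1 ≠ p.2).Nonempty then
    ((Finset.univ : Finset (V × V)).filter fun p => p.1 ≠ p.2).sup' h
      (fun p => (wdist S c2 p.1 p.2 : ℚ) / (wdist E c2 p.1 p.2 : ℚ))
  else 0

/-- The value vector of a spanner. -/
noncomputable def valueVec [Fintype V] (G : SimpleGraph V) (c1 : Sym2 V → ℤ) (c2 : Sym2 V → ℕ)
    (S : Finset (Sym2 V)) : ℚ × ℚ :=
  ((f1 c1 S : ℚ), f2 G.edgeSet (↑S) c2)

/-- `y'` dominates `y`: componentwise `≤` and unequal. -/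
def Dominates (y' y : ℚ × ℚ) : Prop := y' ≤ y ∧ y' ≠ y

/-- The non-dominated set of an MSp instance. -/
def YN [Fintype V] (G : SimpleGraph V) (c1 : Sym2 V → ℤ) (c2 : Sym2 V → ℕ) : Set (ℚ × ℚ) :=
  {y | (∃ S : Finset (Sym2 V), IsSpanner G (↑S) ∧ valueVec G c1 c2 S = y) ∧
       ∀ S' : Finset (Sym2 V), IsSpanner G (↑S') → ¬ Dominates (valueVec G c1 c2 S') y}


/-! ### The MSp instance associated with a BUCO instance (Section 4)

A BUCO instance is given by vectors `a = c¹` and `b = c²` in `ℕ₊ⁿ`; feasible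
solutions are `x : Fin n → Bool` (`x i = true` meaning `x_i = 1`). -/

/-- Vertices of the graph `H`: for each `i`, the vertex `(i,0)` is `v_i`, `(i,1)` is `v_i'`,
and `(i,2)` is `w_i`. -/
abbrev Vtx (n : ℕ) := Fin n × Fin 3

/-- The weights `(c1, c2)` of the (ordered) pair `x y` of vertices of `H`;
`(0, 0)` (in particular `c2 = 0`) marks non-edges.
Here `M = (∑ i, a i) + 1`. -/
def wtB (n : ℕ) (a b : Fin n → ℕ) (x y : Vtx n) : ℤ × ℕ :=
  if x.2 = 0 ∧ y.2 = 2 ∧ x.1 = y.1 then (0, b x.1 + 2)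
  else if x.2 = 0 ∧ y.2 = 1 ∧ x.1 = y.1 then (0, 1)
  else if x.2 = 1 ∧ y.2 = 2 ∧ x.1 = y.1 then ((a x.1 : ℤ), 1)
  else if x.2 = 2 ∧ y.2 = 0 ∧ (y.1 : ℕ) = (x.1 : ℕ) + 1 then (0, 1)
  else if x.2 = 0 ∧ y.2 = 2 ∧ (x.1 : ℕ) = 0 ∧ (y.1 : ℕ) = n - 1 ∧ x.1 ≠ y.1 then
    (((∑ i, a i : ℕ) : ℤ) + 1, 1)
  else (0, 0)

/-- The cost function `c1` of `H`. -/
def c1B (n : ℕ) (a b : Fin n → ℕ) : Sym2 (Vtx n) → ℤ :=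
  Sym2.lift ⟨fun x y => (wtB n a b x y).1 + (wtB n a b y x).1, fun _ _ => add_comm _ _⟩

/-- The length function `c2` of `H`. -/
def c2B (n : ℕ) (a b : Fin n → ℕ) : Sym2 (Vtx n) → ℕ :=
  Sym2.lift ⟨fun x y => (wtB n a b x y).2 + (wtB n a b y x).2, fun _ _ => add_comm _ _⟩

/-- The edge set of `H`: exactly the pairs with positive length. -/
def EB (n : ℕ) (a b : Fin n → ℕ) : Set (Sym2 (Vtx n)) := {e | c2B n a b e ≠ 0}

/-- The graph `H` associated with the BUCO instance `(a, b)`. -/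
def HB (n : ℕ) (a b : Fin n → ℕ) : SimpleGraph (Vtx n) :=
  SimpleGraph.fromEdgeSet (EB n a b)

/-- The vertex `v_i`. -/
def vB (n : ℕ) (i : Fin n) : Vtx n := (i, 0)
/-- The vertex `v_i'`. -/
def pB (n : ℕ) (i : Fin n) : Vtx n := (i, 1)
/-- The vertex `w_i`. -/
def wB (n : ℕ) (i : Fin n) : Vtx n := (i, 2)
/-- The vertex `s = v_1`. -/
def sB (n : ℕ) (hn : 0 < n) : Vtx n := (⟨0, hn⟩, 0)
/-- The vertex `t = w_n`. -/
def tB (n : ℕ) (hn : 0 < n) : Vtx n := (⟨n - 1, Nat.sub_lt hn one_pos⟩, 2)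

open scoped Classical in
/-- The spanner `S_x` of `H` associated with a BUCO solution `x`: all edges of zero
`c1`-cost together with the edges `{v_i', w_i}` for every `i` with `x_i = 0`. -/
noncomputable def Sx (n : ℕ) (a b : Fin n → ℕ) (x : Fin n → Bool) : Finset (Sym2 (Vtx n)) :=
  (Finset.univ.filter fun e => e ∈ (HB n a b).edgeSet ∧ c1B n a b e = 0) ∪
    (Finset.univ.filter fun i : Fin n => x i = false).image fun i => s(pB n i, wB n i)

/-- The value vector `(-c¹ᵀx, c²ᵀx)` of a BUCO solution `x`, as a vector in `ℚ²`. -/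
def bucoVal (n : ℕ) (a b : Fin n → ℕ) (x : Fin n → Bool) : ℚ × ℚ :=
  (-(∑ i, if x i then (a i : ℚ) else 0), ∑ i, if x i then (b i : ℚ) else 0)


lemma wdist_le_walk (F : Set (Sym2 V)) (c2 : Sym2 V → ℕ) {u v : V}
    (p : (fromEdgeSet F).Walk u v) : wdist F c2 u v ≤ (p.edges.map c2).sum :=
  Nat.sInf_le ⟨p, rfl⟩

lemma exists_walk_eq_wdist (F : Set (Sym2 V)) (c2 : Sym2 V → ℕ) {u v : V}
    (h : (fromEdgeSet F).Reachable u v) :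
    ∃ p : (fromEdgeSet F).Walk u v, (p.edges.map c2).sum = wdist F c2 u v := by
  have hne : (Set.range fun p : (fromEdgeSet F).Walk u v => (p.edges.map c2).sum).Nonempty :=
    h.elim fun p => ⟨_, p, rfl⟩
  exact Nat.sInf_mem hne

lemma le_wdist (F : Set (Sym2 V)) (c2 : Sym2 V → ℕ) {u v : V} {m : ℕ}
    (h : (fromEdgeSet F).Reachable u v)
    (hm : ∀ p : (fromEdgeSet F).Walk u v, m ≤ (p.edges.map c2).sum) :
    m ≤ wdist F c2 u v := by
  obtain ⟨p, hp⟩ := exists_walk_eq_wdist F c2 h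
  exact hp ▸ hm p

lemma wdist_self (F : Set (Sym2 V)) (c2 : Sym2 V → ℕ) (u : V) : wdist F c2 u u = 0 :=
  Nat.le_zero.mp (wdist_le_walk F c2 (SimpleGraph.Walk.nil))

lemma wdist_anti (F F' : Set (Sym2 V)) (c2 : Sym2 V → ℕ) (h : F ⊆ F') {u v : V}
    (hr : (fromEdgeSet F).Reachable u v) :
    wdist F' c2 u v ≤ wdist F c2 u v := by
  obtain ⟨p, hp⟩ := exists_walk_eq_wdist F c2 hr
  rw [← hp]
  have hsub : ∀ e ∈ p.edges, e ∈ (fromEdgeSet F').edgeSet := fun e he =>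
    SimpleGraph.edgeSet_mono (SimpleGraph.fromEdgeSet_mono h) (p.edges_subset_edgeSet he)
  calc wdist F' c2 u v ≤ (((p.transfer _ hsub).edges).map c2).sum := wdist_le_walk _ _ _
    _ = (p.edges.map c2).sum := by rw [SimpleGraph.Walk.edges_transfer]

lemma wdist_triangle (F : Set (Sym2 V)) (c2 : Sym2 V → ℕ) {u v w : V}
    (h1 : (fromEdgeSet F).Reachable u v) (h2 : (fromEdgeSet F).Reachable v w) :
    wdist F c2 u w ≤ wdist F c2 u v + wdist F c2 v w := by
  obtain ⟨p, hp⟩ := exists_walk_eq_wdist F c2 h1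
  obtain ⟨q, hq⟩ := exists_walk_eq_wdist F c2 h2
  calc wdist F c2 u w ≤ (((p.append q).edges).map c2).sum := wdist_le_walk _ _ _
    _ = wdist F c2 u v + wdist F c2 v w := by
        rw [SimpleGraph.Walk.edges_append, List.map_append, List.sum_append, hp, hq]

lemma wdist_le_mul (F F' : Set (Sym2 V)) (c2 : Sym2 V → ℕ) (K : ℕ)
    (hconn : (fromEdgeSet F).Connected)
    (h : ∀ x y : V, s(x,y) ∈ F' → x ≠ y → wdist F c2 x y ≤ K * c2 s(x,y))
    {u v : V} (hr' : (fromEdgeSet F').Reachable u v) :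
    wdist F c2 u v ≤ K * wdist F' c2 u v := by
  obtain ⟨p, hp⟩ := exists_walk_eq_wdist F' c2 hr'
  rw [← hp]
  clear hp hr'
  induction p with
  | nil => simp [wdist_self]
  | @cons x y z hadj q ih =>
      have hxy : s(x,y) ∈ F' ∧ x ≠ y := (SimpleGraph.fromEdgeSet_adj _).mp hadj
      calc wdist F c2 x z ≤ wdist F c2 x y + wdist F c2 y z :=
            wdist_triangle F c2 (hconn.preconnected x y) (hconn.preconnected y z)
        _ ≤ K * c2 s(x,y) + K * ((q.edges.map c2).sum) := by
            exact Nat.add_le_add (h x y hxy.1 hxy.2) ih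
        _ = K * (((SimpleGraph.Walk.cons hadj q).edges.map c2).sum) := by
            rw [SimpleGraph.Walk.edges_cons]; simp [Nat.mul_add]

lemma abs_sub_le_walk (F : Set (Sym2 V)) (c2 : Sym2 V → ℕ) (φ : V → ℤ)
    (h : ∀ x y : V, s(x,y) ∈ F → x ≠ y → |φ x - φ y| ≤ (c2 s(x,y) : ℤ))
    {u v : V} (p : (fromEdgeSet F).Walk u v) :
    |φ u - φ v| ≤ ((p.edges.map c2).sum : ℤ) := by
  induction p with
  | nil => simp
  | @cons x y z hadj q ih =>
      have hxy : s(x,y) ∈ F ∧ x ≠ y := (SimpleGraph.fromEdgeSet_adj _).mp hadj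
      calc |φ x - φ z| ≤ |φ x - φ y| + |φ y - φ z| := abs_sub_le _ _ _
        _ ≤ (c2 s(x,y) : ℤ) + ((q.edges.map c2).sum : ℤ) := add_le_add (h x y hxy.1 hxy.2) ih
        _ = (((SimpleGraph.Walk.cons hadj q).edges.map c2).sum : ℤ) := by
            rw [SimpleGraph.Walk.edges_cons]; rw [List.map_cons, List.sum_cons]; push_cast; ring

lemma one_le_walk_sum (F : Set (Sym2 V)) (c2 : Sym2 V → ℕ)
    (hpos : ∀ e ∈ F, c2 e ≠ 0) {u v : V} (hne : u ≠ v)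
    (p : (fromEdgeSet F).Walk u v) : 1 ≤ (p.edges.map c2).sum := by
  cases p with
  | nil => exact absurd rfl hne
  | @cons x y z hadj q =>
      have hxy : s(u,y) ∈ F ∧ u ≠ y := (SimpleGraph.fromEdgeSet_adj _).mp hadj
      have : 1 ≤ c2 s(u,y) := Nat.one_le_iff_ne_zero.mpr (hpos _ hxy.1)
      simp only [SimpleGraph.Walk.edges_cons, List.map_cons, List.sum_cons]
      omega

lemma one_le_wdist (F : Set (Sym2 V)) (c2 : Sym2 V → ℕ)
    (hpos : ∀ e ∈ F, c2 e ≠ 0) {u v : V} (hne : u ≠ v)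
    (hr : (fromEdgeSet F).Reachable u v) : 1 ≤ wdist F c2 u v :=
  le_wdist F c2 hr (one_le_walk_sum F c2 hpos hne)


variable {n : ℕ} {a b : Fin n → ℕ}

lemma wt2_ne {x y : Vtx n} (h : (wtB n a b x y).2 ≠ 0) :
    (x.2 = 0 ∧ y.2 = 2 ∧ x.1 = y.1) ∨ (x.2 = 0 ∧ y.2 = 1 ∧ x.1 = y.1) ∨
    (x.2 = 1 ∧ y.2 = 2 ∧ x.1 = y.1) ∨ (x.2 = 2 ∧ y.2 = 0 ∧ (y.1 : ℕ) = (x.1 : ℕ) + 1) ∨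
    (x.2 = 0 ∧ y.2 = 2 ∧ (x.1 : ℕ) = 0 ∧ (y.1 : ℕ) = n - 1 ∧ x.1 ≠ y.1) := by
  unfold wtB at h
  split_ifs at h with h1 h2 h3 h4 h5
  · exact Or.inl h1
  · exact Or.inr (Or.inl h2)
  · exact Or.inr (Or.inr (Or.inl h3))
  · exact Or.inr (Or.inr (Or.inr (Or.inl h4)))
  · exact Or.inr (Or.inr (Or.inr (Or.inr h5)))
  · simp at h

lemma c2B_vw (i : Fin n) : c2B n a b s(vB n i, wB n i) = b i + 2 := by
  simp [c2B, wtB, vB, wB]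

lemma c1B_vw (i : Fin n) : c1B n a b s(vB n i, wB n i) = 0 := by
  simp [c1B, wtB, vB, wB]

lemma c2B_vp (i : Fin n) : c2B n a b s(vB n i, pB n i) = 1 := by
  simp [c2B, wtB, vB, pB]

lemma c1B_vp (i : Fin n) : c1B n a b s(vB n i, pB n i) = 0 := by
  simp [c1B, wtB, vB, pB]

lemma c2B_pw (i : Fin n) : c2B n a b s(pB n i, wB n i) = 1 := by
  simp [c2B, wtB, pB, wB]

lemma c1B_pw (i : Fin n) : c1B n a b s(pB n i, wB n i) = a i := by
  simp [c1B, wtB, pB, wB]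

lemma c2B_wv {i j : Fin n} (hj : (j : ℕ) = (i : ℕ) + 1) :
    c2B n a b s(wB n i, vB n j) = 1 := by
  have hij : (i : ℕ) ≠ (j : ℕ) := by omega
  have hj0 : (j : ℕ) ≠ 0 := by omega
  simp [c2B, wtB, wB, vB, Fin.ext_iff, hj, hij, hj0, -Fin.val_eq_zero_iff]

lemma c1B_wv {i j : Fin n} (hj : (j : ℕ) = (i : ℕ) + 1) :
    c1B n a b s(wB n i, vB n j) = 0 := by
  have hij : (i : ℕ) ≠ (j : ℕ) := by omega
  have hj0 : (j : ℕ) ≠ 0 := by omega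
  simp [c1B, wtB, wB, vB, Fin.ext_iff, hj, hij, hj0, -Fin.val_eq_zero_iff]

lemma c2B_st (hn : 0 < n) (hn2 : 2 ≤ n) : c2B n a b s(sB n hn, tB n hn) = 1 := by
  have h1 : (0 : ℕ) ≠ n - 1 := by omega
  simp [c2B, wtB, sB, tB, Fin.ext_iff, h1, -Fin.val_eq_zero_iff]

lemma c1B_st (hn : 0 < n) (hn2 : 2 ≤ n) :
    c1B n a b s(sB n hn, tB n hn) = (∑ i, (a i : ℤ)) + 1 := by
  have h1 : (0 : ℕ) ≠ n - 1 := by omega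
  simp [c1B, wtB, sB, tB, Fin.ext_iff, h1, -Fin.val_eq_zero_iff]

lemma mem_EB_elim (hn : 0 < n) {e : Sym2 (Vtx n)} (he : e ∈ EB n a b) :
    (∃ i, e = s(vB n i, wB n i)) ∨ (∃ i, e = s(vB n i, pB n i)) ∨
    (∃ i, e = s(pB n i, wB n i)) ∨
    (∃ i j : Fin n, (j : ℕ) = (i : ℕ) + 1 ∧ e = s(wB n i, vB n j)) ∨
    (2 ≤ n ∧ e = s(sB n hn, tB n hn)) := by
  induction e using Sym2.ind with
  | _ x y =>
    have hsum : (wtB n a b x y).2 + (wtB n a b y x).2 ≠ 0 := he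
    have he' : (wtB n a b x y).2 ≠ 0 ∨ (wtB n a b y x).2 ≠ 0 := by omega
    have key : ∀ x y : Vtx n, (wtB n a b x y).2 ≠ 0 →
        (∃ i, s(x,y) = s(vB n i, wB n i)) ∨ (∃ i, s(x,y) = s(vB n i, pB n i)) ∨
        (∃ i, s(x,y) = s(pB n i, wB n i)) ∨
        (∃ i j : Fin n, (j : ℕ) = (i : ℕ) + 1 ∧ s(x,y) = s(wB n i, vB n j)) ∨
        (2 ≤ n ∧ s(x,y) = s(sB n hn, tB n hn)) := by
      rintro ⟨x1, x2⟩ ⟨y1, y2⟩ h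
      rcases wt2_ne h with ⟨h1, h2, h3⟩ | ⟨h1, h2, h3⟩ | ⟨h1, h2, h3⟩ | ⟨h1, h2, h3⟩ |
        ⟨h1, h2, h3, h4, h5⟩ <;>
        simp only at h1 h2 h3 <;> subst h1 <;> subst h2
      · subst h3; exact Or.inl ⟨x1, rfl⟩
      · subst h3; exact Or.inr (Or.inl ⟨x1, rfl⟩)
      · subst h3; exact Or.inr (Or.inr (Or.inl ⟨x1, rfl⟩))
      · exact Or.inr (Or.inr (Or.inr (Or.inl ⟨x1, y1, h3, rfl⟩)))
      · simp only at h4 h5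
        have h6 : 2 ≤ n := by
          by_contra hcon
          exact h5 (Fin.ext (by omega))
        have hx : x1 = (⟨0, hn⟩ : Fin n) := Fin.ext (by simp [h3])
        have hy : y1 = (⟨n - 1, Nat.sub_lt hn one_pos⟩ : Fin n) := Fin.ext (by simp [h4])
        exact Or.inr (Or.inr (Or.inr (Or.inr ⟨h6, by rw [hx, hy]; rfl⟩)))
    rcases he' with h | h
    · exact key x y h
    · have := key y x h
      rw [Sym2.eq_swap] at this
      exact this

lemma mem_EB_vw (i : Fin n) : s(vB n i, wB n i) ∈ EB n a b := by
  show c2B n a b _ ≠ 0; rw [c2B_vw]; omega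

lemma mem_EB_vp (i : Fin n) : s(vB n i, pB n i) ∈ EB n a b := by
  show c2B n a b _ ≠ 0; rw [c2B_vp]; omega

lemma mem_EB_pw (i : Fin n) : s(pB n i, wB n i) ∈ EB n a b := by
  show c2B n a b _ ≠ 0; rw [c2B_pw]; omega

lemma mem_EB_wv {i j : Fin n} (hj : (j : ℕ) = (i : ℕ) + 1) :
    s(wB n i, vB n j) ∈ EB n a b := by
  show c2B n a b _ ≠ 0; rw [c2B_wv hj]; omega

lemma mem_EB_st (hn : 0 < n) (hn2 : 2 ≤ n) : s(sB n hn, tB n hn) ∈ EB n a b := by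
  show c2B n a b _ ≠ 0; rw [c2B_st hn hn2]; omega

lemma EB_not_isDiag (hn : 0 < n) {e : Sym2 (Vtx n)} (he : e ∈ EB n a b) : ¬ e.IsDiag := by
  rcases mem_EB_elim hn he with ⟨i, rfl⟩ | ⟨i, rfl⟩ | ⟨i, rfl⟩ | ⟨i, j, hj, rfl⟩ | ⟨hn2, rfl⟩ <;>
    simp [vB, wB, pB, sB, tB, Sym2.isDiag_iff_proj_eq, Prod.ext_iff, Fin.ext_iff]

lemma edgeSet_HB (hn : 0 < n) : (HB n a b).edgeSet = EB n a b := by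
  rw [HB, edgeSet_fromEdgeSet]
  ext e
  simp only [Set.mem_diff, Set.mem_setOf_eq]
  exact ⟨fun h => h.1, fun h => ⟨h, EB_not_isDiag hn h⟩⟩

-- generic single/two-edge bounds
lemma wdist_le_c2 {V : Type*} (X : Set (Sym2 V)) (c2 : Sym2 V → ℕ) {x y : V}
    (h : s(x,y) ∈ X) (hne : x ≠ y) : wdist X c2 x y ≤ c2 s(x,y) := by
  have hadj : (fromEdgeSet X).Adj x y := (SimpleGraph.fromEdgeSet_adj _).mpr ⟨h, hne⟩
  calc wdist X c2 x y ≤ (((SimpleGraph.Walk.cons hadj SimpleGraph.Walk.nil)).edges.map c2).sum :=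
        wdist_le_walk _ _ _
    _ = c2 s(x,y) := by simp

lemma wdist_le_two {V : Type*} (X : Set (Sym2 V)) (c2 : Sym2 V → ℕ) {x y z : V}
    (h1 : s(x,y) ∈ X) (h2 : s(y,z) ∈ X) (hxy : x ≠ y) (hyz : y ≠ z) :
    wdist X c2 x z ≤ c2 s(x,y) + c2 s(y,z) := by
  have ha1 : (fromEdgeSet X).Adj x y := (SimpleGraph.fromEdgeSet_adj _).mpr ⟨h1, hxy⟩
  have ha2 : (fromEdgeSet X).Adj y z := (SimpleGraph.fromEdgeSet_adj _).mpr ⟨h2, hyz⟩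
  calc wdist X c2 x z ≤
      (((SimpleGraph.Walk.cons ha1 (SimpleGraph.Walk.cons ha2 SimpleGraph.Walk.nil))).edges.map
        c2).sum := wdist_le_walk _ _ _
    _ = c2 s(x,y) + c2 s(y,z) := by simp

-- distinctness of vertices
lemma vB_ne_pB (i : Fin n) : vB n i ≠ pB n i := by simp [vB, pB, Prod.ext_iff]
lemma vB_ne_wB (i : Fin n) : vB n i ≠ wB n i := by simp [vB, wB, Prod.ext_iff]
lemma pB_ne_wB (i : Fin n) : pB n i ≠ wB n i := by simp [pB, wB, Prod.ext_iff]
lemma wB_ne_vB (i j : Fin n) : wB n i ≠ vB n j := by simp [vB, wB, Prod.ext_iff]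

lemma reach_all (hn : 0 < n) (X : Set (Sym2 (Vtx n)))
    (hvp : ∀ i, s(vB n i, pB n i) ∈ X)
    (hwv : ∀ i j : Fin n, (j:ℕ) = (i:ℕ)+1 → s(wB n i, vB n j) ∈ X)
    (hvw : ∀ i, s(vB n i, wB n i) ∈ X ∨ s(pB n i, wB n i) ∈ X) :
    ∀ x : Vtx n, (fromEdgeSet X).Reachable (vB n ⟨0, hn⟩) x := by
  have hadj_vp : ∀ i, (fromEdgeSet X).Adj (vB n i) (pB n i) := fun i =>
    (SimpleGraph.fromEdgeSet_adj _).mpr ⟨hvp i, vB_ne_pB i⟩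
  have hreach_vw : ∀ i, (fromEdgeSet X).Reachable (vB n i) (wB n i) := by
    intro i
    rcases hvw i with h | h
    · exact ((SimpleGraph.fromEdgeSet_adj _).mpr ⟨h, vB_ne_wB i⟩).reachable
    · exact ((hadj_vp i).reachable).trans
        ((SimpleGraph.fromEdgeSet_adj _).mpr ⟨h, pB_ne_wB i⟩).reachable
  have hadj_wv : ∀ i j : Fin n, (j:ℕ) = (i:ℕ)+1 →
      (fromEdgeSet X).Adj (wB n i) (vB n j) := fun i j hj =>
    (SimpleGraph.fromEdgeSet_adj _).mpr ⟨hwv i j hj, wB_ne_vB i j⟩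
  have hv : ∀ k (hk : k < n), (fromEdgeSet X).Reachable (vB n ⟨0, hn⟩) (vB n ⟨k, hk⟩) := by
    intro k
    induction k with
    | zero => exact fun hk => SimpleGraph.Reachable.refl _
    | succ m ih =>
        intro hk
        have hm : m < n := by omega
        exact ((ih hm).trans (hreach_vw ⟨m, hm⟩)).trans
          ((hadj_wv ⟨m, hm⟩ ⟨m+1, hk⟩ rfl).reachable)
  rintro ⟨j, m⟩
  have hvj : (fromEdgeSet X).Reachable (vB n ⟨0, hn⟩) (vB n j) := by
    have := hv j.1 j.2
    simpa using this
  fin_cases m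
  · exact hvj
  · exact hvj.trans (hadj_vp j).reachable
  · exact hvj.trans (hreach_vw j)

lemma connected_of (hn : 0 < n) (X : Set (Sym2 (Vtx n)))
    (hvp : ∀ i, s(vB n i, pB n i) ∈ X)
    (hwv : ∀ i j : Fin n, (j:ℕ) = (i:ℕ)+1 → s(wB n i, vB n j) ∈ X)
    (hvw : ∀ i, s(vB n i, wB n i) ∈ X ∨ s(pB n i, wB n i) ∈ X) :
    (fromEdgeSet X).Connected := by
  have h := reach_all hn X hvp hwv hvw
  have hpre : (fromEdgeSet X).Preconnected := fun x y => (h x).symm.trans (h y)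
  haveI : Nonempty (Vtx n) := ⟨vB n ⟨0, hn⟩⟩
  exact ⟨hpre⟩

open scoped Classical in
noncomputable def Zfin (n : ℕ) (a b : Fin n → ℕ) : Finset (Sym2 (Vtx n)) :=
  Finset.univ.filter fun e => e ∈ (HB n a b).edgeSet ∧ c1B n a b e = 0

open scoped Classical in
noncomputable def Efin (n : ℕ) (a b : Fin n → ℕ) : Finset (Sym2 (Vtx n)) :=
  Finset.univ.filter fun e => e ∈ EB n a b

noncomputable def Rfin (n : ℕ) (a b : Fin n → ℕ) (hn : 0 < n) : Finset (Sym2 (Vtx n)) :=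
  (Efin n a b).erase (s(sB n hn, tB n hn))

lemma coe_Efin : ↑(Efin n a b) = EB n a b := by ext e; simp [Efin]

lemma mem_Efin {e : Sym2 (Vtx n)} : e ∈ Efin n a b ↔ e ∈ EB n a b := by simp [Efin]

lemma mem_Zfin {e : Sym2 (Vtx n)} :
    e ∈ Zfin n a b ↔ e ∈ (HB n a b).edgeSet ∧ c1B n a b e = 0 := by simp [Zfin]

lemma coe_Zfin_subset (hn : 0 < n) : ↑(Zfin n a b) ⊆ EB n a b := by
  intro e he
  rw [Finset.mem_coe, mem_Zfin, edgeSet_HB hn] at he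
  exact he.1

lemma mem_Zfin_vw (hn : 0 < n) (i : Fin n) : s(vB n i, wB n i) ∈ Zfin n a b :=
  mem_Zfin.mpr ⟨(edgeSet_HB hn).symm ▸ mem_EB_vw i, c1B_vw i⟩

lemma mem_Zfin_vp (hn : 0 < n) (i : Fin n) : s(vB n i, pB n i) ∈ Zfin n a b :=
  mem_Zfin.mpr ⟨(edgeSet_HB hn).symm ▸ mem_EB_vp i, c1B_vp i⟩

lemma mem_Zfin_wv (hn : 0 < n) {i j : Fin n} (hj : (j:ℕ) = (i:ℕ)+1) :
    s(wB n i, vB n j) ∈ Zfin n a b :=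
  mem_Zfin.mpr ⟨(edgeSet_HB hn).symm ▸ mem_EB_wv hj, c1B_wv hj⟩

lemma vp_ne_st (hn : 0 < n) (i : Fin n) :
    s(vB n i, pB n i) ≠ s(sB n hn, tB n hn) := by
  simp [Sym2.eq_iff, vB, pB, sB, tB, Prod.ext_iff]

lemma pw_ne_st (hn : 0 < n) (i : Fin n) :
    s(pB n i, wB n i) ≠ s(sB n hn, tB n hn) := by
  simp [Sym2.eq_iff, pB, wB, sB, tB, Prod.ext_iff]

lemma wv_ne_st (hn : 0 < n) {i j : Fin n} (hj : (j:ℕ) = (i:ℕ)+1) :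
    s(wB n i, vB n j) ≠ s(sB n hn, tB n hn) := by
  rw [Ne, Sym2.eq_iff]
  push_neg
  constructor
  · intro h1
    exact absurd (congrArg Prod.snd h1) (by simp [wB, sB])
  · intro h1 h2
    have := congrArg (fun p => ((Prod.fst p : Fin n) : ℕ)) h2
    simp [vB, sB] at this
    omega

lemma mem_Rfin_vp (hn : 0 < n) (i : Fin n) : s(vB n i, pB n i) ∈ Rfin n a b hn :=
  Finset.mem_erase.mpr ⟨vp_ne_st hn i, mem_Efin.mpr (mem_EB_vp i)⟩

lemma mem_Rfin_pw (hn : 0 < n) (i : Fin n) : s(pB n i, wB n i) ∈ Rfin n a b hn :=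
  Finset.mem_erase.mpr ⟨pw_ne_st hn i, mem_Efin.mpr (mem_EB_pw i)⟩

lemma mem_Rfin_wv (hn : 0 < n) {i j : Fin n} (hj : (j:ℕ) = (i:ℕ)+1) :
    s(wB n i, vB n j) ∈ Rfin n a b hn :=
  Finset.mem_erase.mpr ⟨wv_ne_st hn hj, mem_Efin.mpr (mem_EB_wv hj)⟩

lemma connected_Zfin (hn : 0 < n) : (fromEdgeSet (↑(Zfin n a b) : Set (Sym2 (Vtx n)))).Connected :=
  connected_of hn _ (fun i => mem_Zfin_vp hn i) (fun i j hj => mem_Zfin_wv hn hj)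
    (fun i => Or.inl (mem_Zfin_vw hn i))

lemma connected_Rfin (hn : 0 < n) :
    (fromEdgeSet (↑(Rfin n a b hn) : Set (Sym2 (Vtx n)))).Connected :=
  connected_of hn _ (fun i => mem_Rfin_vp hn i) (fun i j hj => mem_Rfin_wv hn hj)
    (fun i => Or.inr (mem_Rfin_pw hn i))

lemma walkR_aux (hn : 0 < n) : ∀ k : ℕ, ∀ j : Fin n, (j:ℕ) + k = n - 1 →
    ∃ p : (fromEdgeSet (↑(Rfin n a b hn) : Set (Sym2 (Vtx n)))).Walk (vB n j) (tB n hn),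
      (p.edges.map (c2B n a b)).sum ≤ 3*k + 2 := by
  intro k
  induction k with
  | zero =>
      intro j hj
      have hjt : j = (⟨n - 1, Nat.sub_lt hn one_pos⟩ : Fin n) := Fin.ext (by simp; omega)
      have ht : tB n hn = wB n j := by rw [tB, hjt]; rfl
      rw [ht]
      have ha1 : (fromEdgeSet (↑(Rfin n a b hn) : Set (Sym2 (Vtx n)))).Adj (vB n j) (pB n j) :=
        (SimpleGraph.fromEdgeSet_adj _).mpr ⟨mem_Rfin_vp hn j, vB_ne_pB j⟩
      have ha2 : (fromEdgeSet (↑(Rfin n a b hn) : Set (Sym2 (Vtx n)))).Adj (pB n j) (wB n j) :=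
        (SimpleGraph.fromEdgeSet_adj _).mpr ⟨mem_Rfin_pw hn j, pB_ne_wB j⟩
      refine ⟨SimpleGraph.Walk.cons ha1 (SimpleGraph.Walk.cons ha2 SimpleGraph.Walk.nil), ?_⟩
      simp [c2B_vp, c2B_pw]
  | succ m ih =>
      intro j hj
      have hj1 : (j:ℕ) + 1 < n := by omega
      set j' : Fin n := ⟨(j:ℕ) + 1, hj1⟩ with hj'
      obtain ⟨q, hq⟩ := ih j' (by simp [hj']; omega)
      have ha1 : (fromEdgeSet (↑(Rfin n a b hn) : Set (Sym2 (Vtx n)))).Adj (vB n j) (pB n j) :=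
        (SimpleGraph.fromEdgeSet_adj _).mpr ⟨mem_Rfin_vp hn j, vB_ne_pB j⟩
      have ha2 : (fromEdgeSet (↑(Rfin n a b hn) : Set (Sym2 (Vtx n)))).Adj (pB n j) (wB n j) :=
        (SimpleGraph.fromEdgeSet_adj _).mpr ⟨mem_Rfin_pw hn j, pB_ne_wB j⟩
      have ha3 : (fromEdgeSet (↑(Rfin n a b hn) : Set (Sym2 (Vtx n)))).Adj (wB n j) (vB n j') :=
        (SimpleGraph.fromEdgeSet_adj _).mpr ⟨mem_Rfin_wv hn (by simp [hj']), wB_ne_vB j j'⟩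
      refine ⟨SimpleGraph.Walk.cons ha1 (SimpleGraph.Walk.cons ha2
        (SimpleGraph.Walk.cons ha3 q)), ?_⟩
      simp only [SimpleGraph.Walk.edges_cons, List.map_cons, List.sum_cons,
        c2B_vp, c2B_pw, c2B_wv (show ((j':Fin n):ℕ) = (j:ℕ)+1 by simp [hj'])]
      omega

lemma wdist_Rfin_st (hn : 0 < n) :
    wdist (↑(Rfin n a b hn)) (c2B n a b) (sB n hn) (tB n hn) ≤ 3*n - 1 := by
  obtain ⟨p, hp⟩ := walkR_aux hn (n-1) ⟨0, hn⟩ (by simp)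
  have : sB n hn = vB n ⟨0, hn⟩ := rfl
  rw [this]
  calc wdist _ _ _ _ ≤ (p.edges.map (c2B n a b)).sum := wdist_le_walk _ _ p
    _ ≤ 3*(n-1) + 2 := hp
    _ ≤ 3*n - 1 := by omega

/-- Potential function certifying a lower bound on the `pB i`–`wB i` distance. -/
def phiB (n : ℕ) (b : Fin n → ℕ) (i : Fin n) (x : Vtx n) : ℤ :=
  min (min ((b i : ℤ) + 3) (3*(n:ℤ) - 1))
    (if x.2 = 0 then
      (if (x.1:ℕ) ≤ (i:ℕ) then 3*((i:ℕ):ℤ) - 3*((x.1:ℕ):ℤ) + 1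
       else 3*((i:ℕ):ℤ) + 3*((n:ℤ) - 1 - ((x.1:ℕ):ℤ)) + 4)
     else if x.2 = 1 then
      (if (x.1:ℕ) ≤ (i:ℕ) then 3*((i:ℕ):ℤ) - 3*((x.1:ℕ):ℤ)
       else 3*((i:ℕ):ℤ) + 3*((n:ℤ) - 1 - ((x.1:ℕ):ℤ)) + 3)
     else
      (if (x.1:ℕ) < (i:ℕ) then 3*((i:ℕ):ℤ) - 3*((x.1:ℕ):ℤ) - 1
       else 3*((i:ℕ):ℤ) + 3*((n:ℤ) - 1 - ((x.1:ℕ):ℤ)) + 2))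

lemma phiB_v (i j : Fin n) : phiB n b i (vB n j) =
    min (min ((b i : ℤ) + 3) (3*(n:ℤ) - 1))
      (if (j:ℕ) ≤ (i:ℕ) then 3*((i:ℕ):ℤ) - 3*((j:ℕ):ℤ) + 1
       else 3*((i:ℕ):ℤ) + 3*((n:ℤ) - 1 - ((j:ℕ):ℤ)) + 4) := by
  simp only [phiB, vB]
  norm_num

lemma phiB_p (i j : Fin n) : phiB n b i (pB n j) =
    min (min ((b i : ℤ) + 3) (3*(n:ℤ) - 1))
      (if (j:ℕ) ≤ (i:ℕ) then 3*((i:ℕ):ℤ) - 3*((j:ℕ):ℤ)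
       else 3*((i:ℕ):ℤ) + 3*((n:ℤ) - 1 - ((j:ℕ):ℤ)) + 3) := by
  simp only [phiB, pB]
  norm_num

lemma phiB_w (i j : Fin n) : phiB n b i (wB n j) =
    min (min ((b i : ℤ) + 3) (3*(n:ℤ) - 1))
      (if (j:ℕ) < (i:ℕ) then 3*((i:ℕ):ℤ) - 3*((j:ℕ):ℤ) - 1
       else 3*((i:ℕ):ℤ) + 3*((n:ℤ) - 1 - ((j:ℕ):ℤ)) + 2) := by
  simp only [phiB, wB]
  norm_num [Fin.ext_iff]

lemma phiB_p_self (i : Fin n) : phiB n b i (pB n i) = 0 := by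
  have h1 := i.is_lt
  rw [phiB_p]
  simp only [le_refl, if_pos]
  omega

lemma phiB_w_self (i : Fin n) :
    phiB n b i (wB n i) = min ((b i : ℤ) + 3) (3*(n:ℤ) - 1) := by
  have h1 := i.is_lt
  rw [phiB_w, if_neg (lt_irrefl ((i:ℕ)))]
  omega

lemma phiB_lip (hn : 0 < n) (i : Fin n) {x y : Vtx n} (hxy : s(x,y) ∈ EB n a b)
    (hne : s(x,y) ≠ s(pB n i, wB n i)) :
    |phiB n b i x - phiB n b i y| ≤ (c2B n a b s(x,y) : ℤ) := by
  have hi := i.is_lt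
  rcases mem_EB_elim hn hxy with ⟨j, heq⟩ | ⟨j, heq⟩ | ⟨j, heq⟩ | ⟨j, j', hj', heq⟩ |
    ⟨hn2, heq⟩
  · rw [heq, c2B_vw]
    have hjlt := j.is_lt
    rcases eq_or_ne j i with rfl | hji
    · rcases Sym2.eq_iff.mp heq with ⟨hx, hy⟩ | ⟨hx, hy⟩ <;> subst hx <;> subst hy <;>
        [skip; rw [abs_sub_comm]] <;>
        · rw [phiB_v, phiB_w, abs_le]
          split_ifs <;> omega
    · have hji' : (j:ℕ) ≠ (i:ℕ) := fun h => hji (Fin.ext h)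
      rcases Sym2.eq_iff.mp heq with ⟨hx, hy⟩ | ⟨hx, hy⟩ <;> subst hx <;> subst hy <;>
        [skip; rw [abs_sub_comm]] <;>
        · rw [phiB_v, phiB_w, abs_le]
          split_ifs <;> omega
  · rw [heq, c2B_vp]
    have hjlt := j.is_lt
    rcases Sym2.eq_iff.mp heq with ⟨hx, hy⟩ | ⟨hx, hy⟩ <;> subst hx <;> subst hy <;>
      [skip; rw [abs_sub_comm]] <;>
      · rw [phiB_v, phiB_p, abs_le]
        split_ifs <;> omega
  · rw [heq, c2B_pw]
    have hjlt := j.is_lt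
    have hji : j ≠ i := fun h => hne (by rw [heq, h])
    have hji' : (j:ℕ) ≠ (i:ℕ) := fun h => hji (Fin.ext h)
    rcases Sym2.eq_iff.mp heq with ⟨hx, hy⟩ | ⟨hx, hy⟩ <;> subst hx <;> subst hy <;>
      [skip; rw [abs_sub_comm]] <;>
      · rw [phiB_p, phiB_w, abs_le]
        split_ifs <;> omega
  · rw [heq, c2B_wv hj']
    have hjlt := j.is_lt
    have hjlt' := j'.is_lt
    rcases Sym2.eq_iff.mp heq with ⟨hx, hy⟩ | ⟨hx, hy⟩ <;> subst hx <;> subst hy <;>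
      [skip; rw [abs_sub_comm]] <;>
      · rw [phiB_w, phiB_v, abs_le]
        split_ifs <;> omega
  · rw [heq, c2B_st hn hn2]
    have hsv : sB n hn = vB n ⟨0, hn⟩ := rfl
    have htw : tB n hn = wB n ⟨n - 1, Nat.sub_lt hn one_pos⟩ := rfl
    rw [hsv, htw] at heq
    have e0 : (((⟨0, hn⟩ : Fin n)) : ℕ) = 0 := rfl
    have e1 : (((⟨n - 1, Nat.sub_lt hn one_pos⟩ : Fin n)) : ℕ) = n - 1 := rfl
    rcases Sym2.eq_iff.mp heq with ⟨hx, hy⟩ | ⟨hx, hy⟩ <;> subst hx <;> subst hy <;>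
      [skip; rw [abs_sub_comm]] <;>
      · rw [phiB_v, phiB_w, abs_le, e0, e1]
        split_ifs <;> omega

lemma wdist_pw_ge (hn : 0 < n) (i : Fin n) (S : Set (Sym2 (Vtx n))) (hS : S ⊆ EB n a b)
    (hpw : s(pB n i, wB n i) ∉ S)
    (hr : (fromEdgeSet S).Reachable (pB n i) (wB n i)) :
    min (b i + 3) (3*n - 1) ≤ wdist S (c2B n a b) (pB n i) (wB n i) := by
  apply le_wdist _ _ hr
  intro p
  have hlip : ∀ x y : Vtx n, s(x,y) ∈ S → x ≠ y →
      |phiB n b i x - phiB n b i y| ≤ (c2B n a b s(x,y) : ℤ) := fun x y hxy _ =>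
    phiB_lip hn i (hS hxy) (fun h => hpw (h ▸ hxy))
  have hwalk := abs_sub_le_walk S (c2B n a b) (phiB n b i) hlip p
  rw [phiB_p_self, phiB_w_self] at hwalk
  have h1 := i.is_lt
  rw [zero_sub, abs_neg, abs_of_nonneg (by omega)] at hwalk
  omega

lemma pw_inj {i j : Fin n} (h : s(pB n i, wB n i) = s(pB n j, wB n j)) : i = j := by
  rw [Sym2.eq_iff] at h
  rcases h with ⟨h1, -⟩ | ⟨h1, -⟩
  · exact congrArg Prod.fst h1
  · exact absurd (congrArg Prod.snd h1) (by simp [pB, wB])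

open scoped Classical in
lemma f1_no_st_le (hn : 0 < n) {S : Finset (Sym2 (Vtx n))} (hS : ↑S ⊆ EB n a b)
    (hst : s(sB n hn, tB n hn) ∉ S) : f1 (c1B n a b) S ≤ ∑ i, (a i : ℤ) := by
  classical
  set img := Finset.univ.image (fun i : Fin n => s(pB n i, wB n i)) with himg
  have hzero : ∀ e ∈ S, e ∉ S ∩ img → c1B n a b e = 0 := by
    intro e he hni
    have hni' : e ∉ img := fun h => hni (Finset.mem_inter.mpr ⟨he, h⟩)
    rcases mem_EB_elim hn (hS he) with ⟨i, rfl⟩ | ⟨i, rfl⟩ | ⟨i, rfl⟩ | ⟨i, j, hj, rfl⟩ |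
      ⟨hn2, rfl⟩
    · exact c1B_vw i
    · exact c1B_vp i
    · exact absurd (Finset.mem_image_of_mem _ (Finset.mem_univ i)) hni'
    · exact c1B_wv hj
    · exact absurd he hst
  have h1 : f1 (c1B n a b) S = ∑ e ∈ S ∩ img, c1B n a b e :=
    (Finset.sum_subset Finset.inter_subset_left hzero).symm
  have h2 : ∑ e ∈ S ∩ img, c1B n a b e ≤ ∑ e ∈ img, c1B n a b e := by
    apply Finset.sum_le_sum_of_subset_of_nonneg Finset.inter_subset_right
    intro e he _
    obtain ⟨i, -, rfl⟩ := Finset.mem_image.mp he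
    rw [c1B_pw]
    positivity
  have h3 : ∑ e ∈ img, c1B n a b e = ∑ i, (a i : ℤ) := by
    rw [himg, Finset.sum_image (fun i _ j _ h => pw_inj h)]
    exact Finset.sum_congr rfl fun i _ => c1B_pw i
  rw [h1, ← h3]
  exact h2

lemma st_mem_of_M_le (hn : 0 < n) {S : Finset (Sym2 (Vtx n))} (hS : ↑S ⊆ EB n a b)
    (hM : (∑ i, (a i : ℤ)) + 1 ≤ f1 (c1B n a b) S) : s(sB n hn, tB n hn) ∈ S := by
  by_contra h
  have := f1_no_st_le hn hS h
  omega

lemma f2_le_of {V : Type*} [Fintype V] (E S : Set (Sym2 V)) (c2 : Sym2 V → ℕ) (B : ℚ)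
    (hB : 0 ≤ B)
    (h : ∀ u v : V, u ≠ v → (wdist S c2 u v : ℚ) ≤ B * (wdist E c2 u v : ℚ)) :
    f2 E S c2 ≤ B := by
  classical
  unfold f2
  split_ifs with hne
  · apply Finset.sup'_le
    rintro ⟨u, v⟩ hp
    rw [Finset.mem_filter] at hp
    have huv : u ≠ v := hp.2
    rcases Nat.eq_zero_or_pos (wdist E c2 u v) with h0 | hpos
    · rw [h0]; simpa using hB
    · rw [div_le_iff₀ (by exact_mod_cast hpos)]
      exact h u v huv
  · exact hB

lemma le_f2_of {V : Type*} [Fintype V] (E S : Set (Sym2 V)) (c2 : Sym2 V → ℕ) {u v : V}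
    (h : u ≠ v) :
    (wdist S c2 u v : ℚ) / (wdist E c2 u v : ℚ) ≤ f2 E S c2 := by
  classical
  unfold f2
  have hmem : ((u, v) : V × V) ∈ Finset.univ.filter (fun p : V × V => p.1 ≠ p.2) := by
    simp [h]
  rw [dif_pos ⟨_, hmem⟩]
  exact Finset.le_sup'
    (f := fun p : V × V => (wdist S c2 p.1 p.2 : ℚ) / (wdist E c2 p.1 p.2 : ℚ)) hmem

lemma f2_self_eq_one {V : Type*} [Fintype V] [Nontrivial V] (E : Set (Sym2 V))
    (c2 : Sym2 V → ℕ) (hpos : ∀ e ∈ E, c2 e ≠ 0) (hconn : (fromEdgeSet E).Connected) :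
    f2 E E c2 = 1 := by
  classical
  have hrat : ∀ u v : V, u ≠ v → (wdist E c2 u v : ℚ) / (wdist E c2 u v : ℚ) = 1 := by
    intro u v huv
    have : 1 ≤ wdist E c2 u v := one_le_wdist E c2 hpos huv (hconn.preconnected u v)
    rw [div_self (by positivity)]
  obtain ⟨u, v, huv⟩ := exists_pair_ne V
  apply le_antisymm
  · unfold f2
    split_ifs with hne
    · apply Finset.sup'_le
      rintro ⟨x, y⟩ hp
      rw [Finset.mem_filter] at hp
      rw [hrat x y hp.2]
    · norm_num
  · calc (1:ℚ) = (wdist E c2 u v : ℚ) / (wdist E c2 u v : ℚ) := (hrat u v huv).symm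
      _ ≤ f2 E E c2 := le_f2_of E E c2 huv

lemma wdist_comm' {V : Type*} (F : Set (Sym2 V)) (c2 : Sym2 V → ℕ) (u v : V) :
    wdist F c2 u v ≤ wdist F c2 v u := by
  rcases isEmpty_or_nonempty ((fromEdgeSet F).Walk v u) with he | hne
  · have h2 : IsEmpty ((fromEdgeSet F).Walk u v) := ⟨fun p => he.false p.reverse⟩
    have e1 : (Set.range fun p : (fromEdgeSet F).Walk v u => (p.edges.map c2).sum) = ∅ :=
      Set.range_eq_empty _
    have e2 : (Set.range fun p : (fromEdgeSet F).Walk u v => (p.edges.map c2).sum) = ∅ :=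
      Set.range_eq_empty _
    rw [wdist, wdist, e1, e2]
  · obtain ⟨q, hq⟩ := exists_walk_eq_wdist F c2 (Nonempty.elim hne fun q => ⟨q⟩)
    rw [← hq]
    calc wdist F c2 u v ≤ ((q.reverse.edges).map c2).sum := wdist_le_walk _ _ _
      _ = (q.edges.map c2).sum := by
          rw [SimpleGraph.Walk.edges_reverse, List.map_reverse, List.sum_reverse]

lemma wdist_comm {V : Type*} (F : Set (Sym2 V)) (c2 : Sym2 V → ℕ) (u v : V) :
    wdist F c2 u v = wdist F c2 v u :=
  le_antisymm (wdist_comm' F c2 u v) (wdist_comm' F c2 v u)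

lemma f2_anti {V : Type*} [Fintype V] (E S S' : Set (Sym2 V)) (c2 : Sym2 V → ℕ)
    (hss : S ⊆ S') (hconn : (fromEdgeSet S).Connected) : f2 E S' c2 ≤ f2 E S c2 := by
  classical
  unfold f2
  split_ifs with hne
  · apply Finset.sup'_le
    rintro ⟨u, v⟩ hp
    refine le_trans ?_ (Finset.le_sup'
      (f := fun p : V × V => (wdist S c2 p.1 p.2 : ℚ) / (wdist E c2 p.1 p.2 : ℚ)) hp)
    have hw : wdist S' c2 u v ≤ wdist S c2 u v :=
      wdist_anti S S' c2 hss (hconn.preconnected u v)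
    rcases Nat.eq_zero_or_pos (wdist E c2 u v) with h0 | hpos
    · rw [h0]; simp
    · have hc : (0:ℚ) < (wdist E c2 u v : ℚ) := by exact_mod_cast hpos
      exact (div_le_div_iff_of_pos_right hc).mpr (by exact_mod_cast hw)
  · exact le_refl _

lemma YN_snd_injOn {V : Type*} [Fintype V] (G : SimpleGraph V) (c1 : Sym2 V → ℤ)
    (c2 : Sym2 V → ℕ) : Set.InjOn Prod.snd (YN G c1 c2) := by
  intro y hy y' hy' h2
  rcases lt_trichotomy y.1 y'.1 with hlt | heq | hgt
  · obtain ⟨⟨S, hS, hval⟩, -⟩ := hy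
    refine absurd ⟨?_, ?_⟩ (hy'.2 S hS)
    · rw [hval]; exact Prod.le_def.mpr ⟨le_of_lt hlt, le_of_eq h2⟩
    · rw [hval]; exact fun h => absurd (congrArg Prod.fst h) (ne_of_lt hlt)
  · exact Prod.ext heq h2
  · obtain ⟨⟨S, hS, hval⟩, -⟩ := hy'
    refine absurd ⟨?_, ?_⟩ (hy.2 S hS)
    · rw [hval]; exact Prod.le_def.mpr ⟨le_of_lt hgt, le_of_eq h2.symm⟩
    · rw [hval]; exact fun h => absurd (congrArg Prod.fst h) (ne_of_lt hgt)

lemma snd_mem_W (hn : 0 < n) {y : ℚ × ℚ}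
    (hy : y ∈ YN (HB n a b) (c1B n a b) (c2B n a b))
    (hM : ((∑ i, a i : ℕ) : ℚ) + 1 ≤ y.1) :
    y.2 = 1 ∨ ∃ i : Fin n, y.2 = (b i : ℚ) + 3 := by
  classical
  obtain ⟨⟨S, hSsp, hSval⟩, hnd⟩ := hy
  have hEconn : (fromEdgeSet (EB n a b)).Connected :=
    (connected_Zfin hn).mono (fromEdgeSet_mono (coe_Zfin_subset hn))
  have hpos : ∀ e ∈ EB n a b, c2B n a b e ≠ 0 := fun e he => he
  set Sp := S ∪ Zfin n a b with hSp
  have hSsub : (↑S : Set (Sym2 (Vtx n))) ⊆ EB n a b := by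
    have := hSsp.1; rwa [edgeSet_HB hn] at this
  have hSpsub : (↑Sp : Set (Sym2 (Vtx n))) ⊆ EB n a b := by
    rw [hSp, Finset.coe_union]; exact Set.union_subset hSsub (coe_Zfin_subset hn)
  have hSpconn : (fromEdgeSet (↑Sp : Set (Sym2 (Vtx n)))).Connected :=
    hSsp.2.mono (fromEdgeSet_mono (by rw [hSp, Finset.coe_union]; exact Set.subset_union_left))
  have hSpspan : IsSpanner (HB n a b) ↑Sp := ⟨by rw [edgeSet_HB hn]; exact hSpsub, hSpconn⟩
  have hf1eq : f1 (c1B n a b) Sp = f1 (c1B n a b) S := by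
    rw [hSp]
    refine (Finset.sum_subset Finset.subset_union_left ?_).symm
    intro e he hne
    rcases Finset.mem_union.mp he with h | h
    · exact absurd h hne
    · exact (mem_Zfin.mp h).2
  have hf2le : f2 (HB n a b).edgeSet ↑Sp (c2B n a b) ≤ f2 (HB n a b).edgeSet ↑S (c2B n a b) :=
    f2_anti _ _ _ _ (by rw [hSp, Finset.coe_union]; exact Set.subset_union_left) hSsp.2
  have hvle : valueVec (HB n a b) (c1B n a b) (c2B n a b) Sp ≤ y := by
    rw [← hSval]
    exact Prod.le_def.mpr ⟨by simp [valueVec, hf1eq], hf2le⟩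
  have hveq : valueVec (HB n a b) (c1B n a b) (c2B n a b) Sp = y := by
    by_contra hne'
    exact hnd Sp hSpspan ⟨hvle, hne'⟩
  have hy1 : y.1 = ((f1 (c1B n a b) Sp : ℤ) : ℚ) := by rw [← hveq]; rfl
  have hy2 : y.2 = f2 (EB n a b) ↑Sp (c2B n a b) := by
    rw [← hveq]
    show f2 (HB n a b).edgeSet _ _ = _
    rw [edgeSet_HB hn]
  have hMZ : (∑ i, (a i : ℤ)) + 1 ≤ f1 (c1B n a b) Sp := by
    rw [hy1] at hM
    have : ((∑ i, a i : ℕ) : ℤ) + 1 ≤ f1 (c1B n a b) Sp := by exact_mod_cast hM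
    rwa [Nat.cast_sum] at this
  have hst : s(sB n hn, tB n hn) ∈ Sp := st_mem_of_M_le hn hSpsub hMZ
  set U := Finset.univ.filter (fun i : Fin n => s(pB n i, wB n i) ∉ Sp) with hU
  rcases Finset.eq_empty_or_nonempty U with hUe | hUne
  · left
    have hEsub : EB n a b ⊆ ↑Sp := by
      intro e he
      rcases mem_EB_elim hn he with ⟨i, rfl⟩ | ⟨i, rfl⟩ | ⟨i, rfl⟩ | ⟨i, j, hj, rfl⟩ |
        ⟨hn2, rfl⟩
      · exact Finset.mem_coe.mpr (Finset.mem_union_right _ (mem_Zfin_vw hn i))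
      · exact Finset.mem_coe.mpr (Finset.mem_union_right _ (mem_Zfin_vp hn i))
      · by_contra hc
        have hiU : i ∈ U := Finset.mem_filter.mpr ⟨Finset.mem_univ _, fun h => hc h⟩
        rw [hUe] at hiU
        exact Finset.notMem_empty _ hiU
      · exact Finset.mem_coe.mpr (Finset.mem_union_right _ (mem_Zfin_wv hn hj))
      · exact Finset.mem_coe.mpr hst
    have hSpE : (↑Sp : Set (Sym2 (Vtx n))) = EB n a b := Set.Subset.antisymm hSpsub hEsub
    haveI : Nontrivial (Vtx n) := ⟨vB n ⟨0, hn⟩, pB n ⟨0, hn⟩, vB_ne_pB _⟩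
    rw [hy2, hSpE, f2_self_eq_one _ _ hpos hEconn]
  · obtain ⟨i0, hi0U, hBi0⟩ := Finset.exists_mem_eq_sup' hUne (fun i => b i + 3)
    set B := U.sup' hUne (fun i => b i + 3) with hB
    have hi0 : s(pB n i0, wB n i0) ∉ Sp := (Finset.mem_filter.mp hi0U).2
    have hB1 : 1 ≤ B := le_trans (by omega) (Finset.le_sup' (f := fun i => b i + 3) hi0U)
    have hkey : ∀ x z : Vtx n, s(x,z) ∈ EB n a b → x ≠ z →
        wdist ↑Sp (c2B n a b) x z ≤ B * c2B n a b s(x,z) := by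
      intro x z hxz hnxz
      by_cases hmem : s(x,z) ∈ Sp
      · calc wdist ↑Sp (c2B n a b) x z ≤ c2B n a b s(x,z) :=
              wdist_le_c2 _ _ (Finset.mem_coe.mpr hmem) hnxz
          _ ≤ B * c2B n a b s(x,z) := Nat.le_mul_of_pos_left _ hB1
      · rcases mem_EB_elim hn hxz with ⟨i, heq⟩ | ⟨i, heq⟩ | ⟨i, heq⟩ | ⟨i, j, hj, heq⟩ |
          ⟨hn2, heq⟩
        · exact absurd (heq ▸ Finset.mem_union_right _ (mem_Zfin_vw hn i) :
            s(x,z) ∈ Sp) hmem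
        · exact absurd (heq ▸ Finset.mem_union_right _ (mem_Zfin_vp hn i) :
            s(x,z) ∈ Sp) hmem
        · have hiU : i ∈ U := Finset.mem_filter.mpr
            ⟨Finset.mem_univ _, fun h => hmem (heq ▸ h)⟩
          have hpv : s(pB n i, vB n i) ∈ (↑Sp : Set (Sym2 (Vtx n))) := by
            rw [Sym2.eq_swap]
            exact Finset.mem_coe.mpr (Finset.mem_union_right _ (mem_Zfin_vp hn i))
          have hvw : s(vB n i, wB n i) ∈ (↑Sp : Set (Sym2 (Vtx n))) :=
            Finset.mem_coe.mpr (Finset.mem_union_right _ (mem_Zfin_vw hn i))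
          have h2 : wdist ↑Sp (c2B n a b) (pB n i) (wB n i) ≤ b i + 3 := by
            calc wdist ↑Sp (c2B n a b) (pB n i) (wB n i) ≤
                c2B n a b s(pB n i, vB n i) + c2B n a b s(vB n i, wB n i) :=
                  wdist_le_two _ _ hpv hvw (Ne.symm (vB_ne_pB i)) (vB_ne_wB i)
              _ = b i + 3 := by
                  rw [show s(pB n i, vB n i) = s(vB n i, pB n i) from Sym2.eq_swap,
                    c2B_vp, c2B_vw]
                  omega
          have hle : wdist ↑Sp (c2B n a b) (pB n i) (wB n i) ≤ B :=
            le_trans h2 (Finset.le_sup' (f := fun i => b i + 3) hiU)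
          rcases Sym2.eq_iff.mp heq with ⟨hx, hz⟩ | ⟨hx, hz⟩ <;> subst hx <;> subst hz
          · rw [c2B_pw, Nat.mul_one]; exact hle
          · rw [show s(wB n i, pB n i) = s(pB n i, wB n i) from Sym2.eq_swap, c2B_pw,
              Nat.mul_one, wdist_comm]
            exact hle
        · exact absurd (heq ▸ Finset.mem_union_right _ (mem_Zfin_wv hn hj) :
            s(x,z) ∈ Sp) hmem
        · exact absurd (heq ▸ hst : s(x,z) ∈ Sp) hmem
    have hupper : y.2 ≤ (B : ℚ) := by
      rw [hy2]
      apply f2_le_of _ _ _ _ (by positivity)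
      intro u v huv
      have h1 : wdist ↑Sp (c2B n a b) u v ≤ B * wdist (EB n a b) (c2B n a b) u v :=
        wdist_le_mul _ _ _ B hSpconn hkey (hEconn.preconnected u v)
      push_cast
      exact_mod_cast h1
    -- the spanner without the (s,t) edge
    have hRsub : (↑(Rfin n a b hn) : Set (Sym2 (Vtx n))) ⊆ EB n a b := by
      intro e he
      exact mem_Efin.mp (Finset.mem_of_mem_erase (Finset.mem_coe.mp he))
    have hRspan : IsSpanner (HB n a b) ↑(Rfin n a b hn) :=
      ⟨by rw [edgeSet_HB hn]; exact hRsub, connected_Rfin hn⟩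
    have hRf1 : f1 (c1B n a b) (Rfin n a b hn) ≤ ∑ i, (a i : ℤ) :=
      f1_no_st_le hn hRsub (Finset.notMem_erase _ _)
    have hRlt1 : (valueVec (HB n a b) (c1B n a b) (c2B n a b) (Rfin n a b hn)).1 < y.1 := by
      have h1 : (valueVec (HB n a b) (c1B n a b) (c2B n a b) (Rfin n a b hn)).1 =
          ((f1 (c1B n a b) (Rfin n a b hn) : ℤ) : ℚ) := rfl
      rw [h1]
      have h2 : ((f1 (c1B n a b) (Rfin n a b hn) : ℤ) : ℚ) ≤ ((∑ i, (a i : ℤ) : ℤ) : ℚ) := by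
        exact_mod_cast hRf1
      have h3 : ((∑ i, (a i : ℤ) : ℤ) : ℚ) = ((∑ i, a i : ℕ) : ℚ) := by push_cast; ring
      calc ((f1 (c1B n a b) (Rfin n a b hn) : ℤ) : ℚ) ≤ ((∑ i, a i : ℕ) : ℚ) := by
            rw [← h3]; exact h2
        _ < ((∑ i, a i : ℕ) : ℚ) + 1 := by linarith
        _ ≤ y.1 := hM
    have hy2lt : y.2 < f2 (EB n a b) ↑(Rfin n a b hn) (c2B n a b) := by
      by_contra hge
      push_neg at hge
      apply hnd (Rfin n a b hn) hRspan
      constructor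
      · refine Prod.le_def.mpr ⟨le_of_lt hRlt1, ?_⟩
        have h1 : (valueVec (HB n a b) (c1B n a b) (c2B n a b) (Rfin n a b hn)).2 =
            f2 (EB n a b) ↑(Rfin n a b hn) (c2B n a b) := by
          show f2 (HB n a b).edgeSet _ _ = _
          rw [edgeSet_HB hn]
        rw [h1]
        exact hge
      · exact fun h => absurd (congrArg Prod.fst h) (ne_of_lt hRlt1)
    have hkeyR : ∀ x z : Vtx n, s(x,z) ∈ EB n a b → x ≠ z →
        wdist ↑(Rfin n a b hn) (c2B n a b) x z ≤ (3*n - 1) * c2B n a b s(x,z) := by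
      intro x z hxz hnxz
      by_cases hmem : s(x,z) ∈ Rfin n a b hn
      · calc wdist ↑(Rfin n a b hn) (c2B n a b) x z ≤ c2B n a b s(x,z) :=
              wdist_le_c2 _ _ (Finset.mem_coe.mpr hmem) hnxz
          _ ≤ (3*n - 1) * c2B n a b s(x,z) := Nat.le_mul_of_pos_left _ (by omega)
      · have hest : s(x,z) = s(sB n hn, tB n hn) := by
          by_contra hc
          exact hmem (Finset.mem_erase.mpr ⟨hc, mem_Efin.mpr hxz⟩)
        rcases Nat.lt_or_ge n 2 with hn1 | hn2
        · -- n = 1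
          have hone : n = 1 := by omega
          subst hone
          have hst1 : s(sB 1 hn, tB 1 hn) = s(vB 1 ⟨0, hn⟩, wB 1 ⟨0, hn⟩) := rfl
          rw [hst1] at hest
          have hpv : s(pB 1 ⟨0, hn⟩, vB 1 ⟨0, hn⟩) ∈
              (↑(Rfin 1 a b hn) : Set (Sym2 (Vtx 1))) := by
            rw [Sym2.eq_swap]
            exact Finset.mem_coe.mpr (mem_Rfin_vp hn _)
          have hpw : s(pB 1 ⟨0, hn⟩, wB 1 ⟨0, hn⟩) ∈
              (↑(Rfin 1 a b hn) : Set (Sym2 (Vtx 1))) :=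
            Finset.mem_coe.mpr (mem_Rfin_pw hn _)
          have hvp : s(vB 1 ⟨0, hn⟩, pB 1 ⟨0, hn⟩) ∈
              (↑(Rfin 1 a b hn) : Set (Sym2 (Vtx 1))) :=
            Finset.mem_coe.mpr (mem_Rfin_vp hn _)
          have h2 : wdist ↑(Rfin 1 a b hn) (c2B 1 a b) (vB 1 ⟨0, hn⟩) (wB 1 ⟨0, hn⟩) ≤ 2 := by
            calc wdist ↑(Rfin 1 a b hn) (c2B 1 a b) (vB 1 ⟨0, hn⟩) (wB 1 ⟨0, hn⟩) ≤
                c2B 1 a b s(vB 1 ⟨0, hn⟩, pB 1 ⟨0, hn⟩) +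
                  c2B 1 a b s(pB 1 ⟨0, hn⟩, wB 1 ⟨0, hn⟩) :=
                  wdist_le_two _ _ hvp hpw (vB_ne_pB _) (pB_ne_wB _)
              _ = 2 := by rw [c2B_vp, c2B_pw]
          rcases Sym2.eq_iff.mp hest with ⟨hx, hz⟩ | ⟨hx, hz⟩ <;> subst hx <;> subst hz
          · rw [c2B_vw]
            calc wdist ↑(Rfin 1 a b hn) (c2B 1 a b) (vB 1 ⟨0, hn⟩) (wB 1 ⟨0, hn⟩) ≤ 2 := h2
              _ ≤ (3*1 - 1) * (b ⟨0, hn⟩ + 2) := by omega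
          · rw [show s(wB 1 ⟨0, hn⟩, vB 1 ⟨0, hn⟩) = s(vB 1 ⟨0, hn⟩, wB 1 ⟨0, hn⟩) from
              Sym2.eq_swap, c2B_vw, wdist_comm]
            calc wdist ↑(Rfin 1 a b hn) (c2B 1 a b) (vB 1 ⟨0, hn⟩) (wB 1 ⟨0, hn⟩) ≤ 2 := h2
              _ ≤ (3*1 - 1) * (b ⟨0, hn⟩ + 2) := by omega
        · -- n ≥ 2
          have hst2 : wdist ↑(Rfin n a b hn) (c2B n a b) (sB n hn) (tB n hn) ≤ 3*n - 1 :=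
            wdist_Rfin_st hn
          rcases Sym2.eq_iff.mp hest with ⟨hx, hz⟩ | ⟨hx, hz⟩ <;> subst hx <;> subst hz
          · rw [c2B_st hn hn2, Nat.mul_one]
            exact hst2
          · rw [show s(tB n hn, sB n hn) = s(sB n hn, tB n hn) from Sym2.eq_swap,
              c2B_st hn hn2, Nat.mul_one, wdist_comm]
            exact hst2
    have hRle : f2 (EB n a b) ↑(Rfin n a b hn) (c2B n a b) ≤ ((3*n - 1 : ℕ) : ℚ) := by
      apply f2_le_of _ _ _ _ (by positivity)
      intro u v huv
      have h1 : wdist ↑(Rfin n a b hn) (c2B n a b) u v ≤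
          (3*n - 1) * wdist (EB n a b) (c2B n a b) u v :=
        wdist_le_mul _ _ _ (3*n - 1) (connected_Rfin hn) hkeyR (hEconn.preconnected u v)
      exact_mod_cast h1
    have hy2lt' : y.2 < ((3*n - 1 : ℕ) : ℚ) := lt_of_lt_of_le hy2lt hRle
    right
    refine ⟨i0, ?_⟩
    have hd1 : wdist (EB n a b) (c2B n a b) (pB n i0) (wB n i0) = 1 := by
      refine le_antisymm ?_ (one_le_wdist _ _ hpos (pB_ne_wB i0) (hEconn.preconnected _ _))
      have := wdist_le_c2 (EB n a b) (c2B n a b) (mem_EB_pw i0) (pB_ne_wB i0)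
      rwa [c2B_pw] at this
    have hdge : min (b i0 + 3) (3*n - 1) ≤ wdist ↑Sp (c2B n a b) (pB n i0) (wB n i0) :=
      wdist_pw_ge hn i0 _ hSpsub (fun h => hi0 (Finset.mem_coe.mp h))
        (hSpconn.preconnected _ _)
    have hratio : ((wdist ↑Sp (c2B n a b) (pB n i0) (wB n i0) : ℕ) : ℚ) ≤ y.2 := by
      have h1 := le_f2_of (EB n a b) ↑Sp (c2B n a b) (pB_ne_wB i0)
      rw [hd1] at h1
      rw [hy2]
      simpa using h1
    have hblt : (b i0 + 3 : ℕ) ≤ wdist ↑Sp (c2B n a b) (pB n i0) (wB n i0) := by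
      rcases le_total (b i0 + 3) (3*n - 1) with hc | hc
      · rwa [min_eq_left hc] at hdge
      · exfalso
        rw [min_eq_right hc] at hdge
        have h4 : ((3*n - 1 : ℕ) : ℚ) ≤ y.2 := le_trans (by exact_mod_cast hdge) hratio
        exact absurd h4 (not_le.mpr hy2lt')
    have hup : y.2 ≤ ((b i0 + 3 : ℕ) : ℚ) := by
      rw [← hBi0]
      exact hupper
    have hdown : ((b i0 + 3 : ℕ) : ℚ) ≤ y.2 := le_trans (by exact_mod_cast hblt) hratio
    have hfin := le_antisymm hup hdown
    push_cast at hfin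
    exact hfin

/-- The non-dominated set of the MSp instance associated with a BUCO
instance contains at most `n + 1` value vectors `y` with first component `y¹ ≥ M`. -/
theorem card_YN_above_M_le (n : ℕ) (hn : 0 < n) (a b : Fin n → ℕ)
    (ha : ∀ i, 0 < a i) (hb : ∀ i, 0 < b i) :
    ({y ∈ YN (HB n a b) (c1B n a b) (c2B n a b) |
        ((∑ i, a i : ℕ) : ℚ) + 1 ≤ y.1}).ncard ≤ n + 1 := by
  classical
  set A := {y ∈ YN (HB n a b) (c1B n a b) (c2B n a b) |
      ((∑ i, a i : ℕ) : ℚ) + 1 ≤ y.1} with hA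
  set W : Set ℚ := insert 1 (Set.range fun i : Fin n => (b i : ℚ) + 3) with hW
  have hWfin : W.Finite := (Set.finite_range _).insert 1
  have himg : Prod.snd '' A ⊆ W := by
    rintro z ⟨y, hy, rfl⟩
    rcases snd_mem_W hn hy.1 hy.2 with h | ⟨i, h⟩
    · exact Set.mem_insert_iff.mpr (Or.inl h)
    · exact Set.mem_insert_iff.mpr (Or.inr ⟨i, h.symm⟩)
  have hinj : Set.InjOn Prod.snd A := (YN_snd_injOn _ _ _).mono (fun y hy => hy.1)
  calc A.ncard = (Prod.snd '' A).ncard := (Set.ncard_image_of_injOn hinj).symm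
    _ ≤ W.ncard := Set.ncard_le_ncard himg hWfin
    _ ≤ (Set.range fun i : Fin n => (b i : ℚ) + 3).ncard + 1 := Set.ncard_insert_le _ _
    _ ≤ n + 1 := by
        have h1 : (Set.range fun i : Fin n => (b i : ℚ) + 3).ncard ≤ n := by
          rw [← Set.image_univ]
          calc ((fun i : Fin n => (b i : ℚ) + 3) '' Set.univ).ncard ≤
              (Set.univ : Set (Fin n)).ncard := Set.ncard_image_le Set.finite_univ
            _ = n := by rw [Set.ncard_univ]; simp
        omega

end MSpPaper
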